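/- Suppose cos θ0 = 0, sin θ1 ≠ 0 and cos θ1 ≠ 0. Then the first moment E₁(t) converges, as t → ∞, to (2p − 1)·(1 − 2·s1²)/(2·s1²), where s1 = sin θ1. -/

import Mathlib

open Matrix Complex Filter

/-- Local operation `P(θ0,θ1)`. -/
noncomputable def Pmat (θ0 θ1 : ℝ) : Matrix (Fin 2) (Fin 2) ℂ :=
  !![0, (Real.cos θ0 : ℂ);
     ((Real.sin θ0 * Real.sin θ1 : ℝ) : ℂ), (-((Real.sin θ0 * Real.cos θ1 : ℝ) : ℂ))]

/-- Local operation `Q(θ0,θ1)`. -/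
noncomputable def Qmat (θ0 θ1 : ℝ) : Matrix (Fin 2) (Fin 2) ℂ :=
  !![((Real.sin θ0 * Real.cos θ1 : ℝ) : ℂ), ((Real.sin θ0 * Real.sin θ1 : ℝ) : ℂ);
     (Real.cos θ0 : ℂ), 0]

/-- The open quantum walk on ℤ with initial state `diagonal (p, 1-p)` at the origin. -/
noncomputable def owalk (θ0 θ1 p : ℝ) : ℕ → ℤ → Matrix (Fin 2) (Fin 2) ℂ
  | 0, x => if x = 0 then Matrix.diagonal ![(p : ℂ), ((1 - p : ℝ) : ℂ)] else 0
  | t + 1, x =>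
      Pmat θ0 θ1 * owalk θ0 θ1 p t (x + 1) * (Pmat θ0 θ1)ᴴ
        + Qmat θ0 θ1 * owalk θ0 θ1 p t (x - 1) * (Qmat θ0 θ1)ᴴ

/-- Finding probability at position `x` at time `t`. -/
noncomputable def findprob (θ0 θ1 p : ℝ) (t : ℕ) (x : ℤ) : ℝ :=
  ((owalk θ0 θ1 p t x).trace).re

/-- First moment (finite sum: the walk vanishes outside `[-t, t]`). -/
noncomputable def moment1 (θ0 θ1 p : ℝ) (t : ℕ) : ℝ :=
  ∑ x ∈ Finset.Icc (-(t : ℤ)) (t : ℤ), (x : ℝ) * findprob θ0 θ1 p t x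

/-- Second moment. -/
noncomputable def moment2 (θ0 θ1 p : ℝ) (t : ℕ) : ℝ :=
  ∑ x ∈ Finset.Icc (-(t : ℤ)) (t : ℤ), (x : ℝ) ^ 2 * findprob θ0 θ1 p t x

/-- Standard deviation. -/
noncomputable def stdDev (θ0 θ1 p : ℝ) (t : ℕ) : ℝ :=
  Real.sqrt (moment2 θ0 θ1 p t - (moment1 θ0 θ1 p t) ^ 2)

/-! ### Auxiliary machinery -/

lemma owalk_offdiag (θ0 θ1 p : ℝ) (hc0 : Real.cos θ0 = 0) (t : ℕ) (x : ℤ) :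
    (owalk θ0 θ1 p t x) 0 1 = 0 ∧ (owalk θ0 θ1 p t x) 1 0 = 0 := by
  cases t with
  | zero =>
    simp only [owalk]
    split <;> simp [Matrix.diagonal_apply_ne]
  | succ t =>
    simp only [owalk, Matrix.add_apply]
    constructor <;>
      simp [Pmat, Qmat, Matrix.mul_apply, Fin.sum_univ_two, Matrix.conjTranspose_apply, hc0,
        Matrix.vecMul, dotProduct, Complex.conj_ofReal, -Complex.ofReal_sin,
        -Complex.ofReal_cos]

lemma owalk_supp (θ0 θ1 p : ℝ) : ∀ (t : ℕ) (x : ℤ), (t : ℤ) < |x| → owalk θ0 θ1 p t x = 0 := by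
  intro t
  induction t with
  | zero =>
    intro x hx
    have : x ≠ 0 := by rintro rfl; simp at hx
    simp [owalk, this]
  | succ t ih =>
    intro x hx
    have h1 : owalk θ0 θ1 p t (x + 1) = 0 := by
      apply ih; rw [lt_abs] at hx ⊢; push_cast at hx ⊢; omega
    have h2 : owalk θ0 θ1 p t (x - 1) = 0 := by
      apply ih; rw [lt_abs] at hx ⊢; push_cast at hx ⊢; omega
    simp [owalk, h1, h2]

lemma owalk_step00 (θ0 θ1 p : ℝ) (hc0 : Real.cos θ0 = 0) (t : ℕ) (x : ℤ) :
    (owalk θ0 θ1 p (t + 1) x) 0 0 =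
      (Real.cos θ1 : ℂ) ^ 2 * (owalk θ0 θ1 p t (x - 1)) 0 0
        + (Real.sin θ1 : ℂ) ^ 2 * (owalk θ0 θ1 p t (x - 1)) 1 1 := by
  have hs0 : (Real.sin θ0 : ℂ) ^ 2 = 1 := by
    rw [← Complex.ofReal_pow, Real.sin_sq, hc0]; norm_num
  obtain ⟨h01, h10⟩ := owalk_offdiag θ0 θ1 p hc0 t (x - 1)
  simp only [owalk, Matrix.add_apply]
  simp [Pmat, Qmat, Matrix.mul_apply, Fin.sum_univ_two, Matrix.conjTranspose_apply, hc0,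
    Matrix.vecMul, dotProduct, Complex.conj_ofReal, -Complex.ofReal_sin,
    -Complex.ofReal_cos, h01, h10]
  linear_combination ((Real.cos θ1 : ℂ) ^ 2 * (owalk θ0 θ1 p t (x - 1)) 0 0 +
    (Real.sin θ1 : ℂ) ^ 2 * (owalk θ0 θ1 p t (x - 1)) 1 1) * hs0

lemma owalk_step11 (θ0 θ1 p : ℝ) (hc0 : Real.cos θ0 = 0) (t : ℕ) (x : ℤ) :
    (owalk θ0 θ1 p (t + 1) x) 1 1 =
      (Real.sin θ1 : ℂ) ^ 2 * (owalk θ0 θ1 p t (x + 1)) 0 0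
        + (Real.cos θ1 : ℂ) ^ 2 * (owalk θ0 θ1 p t (x + 1)) 1 1 := by
  have hs0 : (Real.sin θ0 : ℂ) ^ 2 = 1 := by
    rw [← Complex.ofReal_pow, Real.sin_sq, hc0]; norm_num
  obtain ⟨h01, h10⟩ := owalk_offdiag θ0 θ1 p hc0 t (x + 1)
  simp only [owalk, Matrix.add_apply]
  simp [Pmat, Qmat, Matrix.mul_apply, Fin.sum_univ_two, Matrix.conjTranspose_apply, hc0,
    Matrix.vecMul, dotProduct, Complex.conj_ofReal, -Complex.ofReal_sin,
    -Complex.ofReal_cos, h01, h10]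
  linear_combination ((Real.sin θ1 : ℂ) ^ 2 * (owalk θ0 θ1 p t (x + 1)) 0 0 +
    (Real.cos θ1 : ℂ) ^ 2 * (owalk θ0 θ1 p t (x + 1)) 1 1) * hs0

lemma sum_ext_icc (h : ℤ → ℂ) (t : ℕ) (hz : ∀ x : ℤ, (t : ℤ) < |x| → h x = 0)
    (a b : ℤ) (ha : a ≤ -(t : ℤ)) (hb : (t : ℤ) ≤ b) :
    ∑ x ∈ Finset.Icc a b, h x = ∑ x ∈ Finset.Icc (-(t : ℤ)) t, h x := by
  refine (Finset.sum_subset (Finset.Icc_subset_Icc ha hb) ?_).symm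
  intro x hx hnx
  apply hz
  rw [Finset.mem_Icc] at hnx
  rw [lt_abs]
  omega

lemma sum_reindex_icc (h : ℤ → ℂ) (a b c : ℤ) :
    ∑ x ∈ Finset.Icc a b, h (x + c) = ∑ y ∈ Finset.Icc (a + c) (b + c), h y := by
  rw [← Finset.map_add_right_Icc, Finset.sum_map]; rfl

lemma sum_shift_icc (h : ℤ → ℂ) (t : ℕ) (hz : ∀ x : ℤ, (t : ℤ) < |x| → h x = 0)
    (c : ℤ) (hc : |c| ≤ 1) :
    ∑ x ∈ Finset.Icc (-((t : ℤ) + 1)) ((t : ℤ) + 1), h (x + c) =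
      ∑ x ∈ Finset.Icc (-(t : ℤ)) t, h x := by
  rw [sum_reindex_icc]
  rw [abs_le] at hc
  exact sum_ext_icc h t hz _ _ (by omega) (by omega)

/-- `Σ_x (ρ_t(x)_{00} - ρ_t(x)_{11})`. -/
noncomputable def Sdq (θ0 θ1 p : ℝ) (t : ℕ) : ℂ :=
  ∑ x ∈ Finset.Icc (-(t : ℤ)) (t : ℤ),
    ((owalk θ0 θ1 p t x) 0 0 - (owalk θ0 θ1 p t x) 1 1)

/-- `Σ_x x (ρ_t(x)_{00} + ρ_t(x)_{11})`. -/
noncomputable def Emq (θ0 θ1 p : ℝ) (t : ℕ) : ℂ :=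
  ∑ x ∈ Finset.Icc (-(t : ℤ)) (t : ℤ),
    (x : ℂ) * ((owalk θ0 θ1 p t x) 0 0 + (owalk θ0 θ1 p t x) 1 1)

lemma Sdq_succ (θ0 θ1 p : ℝ) (hc0 : Real.cos θ0 = 0) (t : ℕ) :
    Sdq θ0 θ1 p (t + 1) =
      ((Real.cos θ1 : ℂ) ^ 2 - (Real.sin θ1 : ℂ) ^ 2) * Sdq θ0 θ1 p t := by
  set c : ℂ := (Real.cos θ1 : ℂ) with hc
  set s : ℂ := (Real.sin θ1 : ℂ) with hs
  set f : ℤ → ℂ := fun y => (owalk θ0 θ1 p t y) 0 0 with hf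
  set g : ℤ → ℂ := fun y => (owalk θ0 θ1 p t y) 1 1 with hg
  have hzf : ∀ y : ℤ, (t : ℤ) < |y| → f y = 0 := fun y hy => by
    simp [hf, owalk_supp θ0 θ1 p t y hy]
  have hzg : ∀ y : ℤ, (t : ℤ) < |y| → g y = 0 := fun y hy => by
    simp [hg, owalk_supp θ0 θ1 p t y hy]
  have hcast : ((t + 1 : ℕ) : ℤ) = (t : ℤ) + 1 := by push_cast; ring
  have step : ∀ x : ℤ,
      (owalk θ0 θ1 p (t + 1) x) 0 0 - (owalk θ0 θ1 p (t + 1) x) 1 1 =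
        (fun y => c ^ 2 * f y + s ^ 2 * g y) (x + (-1))
          - (fun y => s ^ 2 * f y + c ^ 2 * g y) (x + 1) := by
    intro x
    have h1 := owalk_step00 θ0 θ1 p hc0 t x
    have h2 := owalk_step11 θ0 θ1 p hc0 t x
    simp only [hf, hg, ← hc, ← hs] at h1 h2 ⊢
    rw [h1, h2]
    have : x + (-1) = x - 1 := by ring
    rw [this]
  unfold Sdq
  rw [hcast]
  calc ∑ x ∈ Finset.Icc (-((t : ℤ) + 1)) ((t : ℤ) + 1),
        ((owalk θ0 θ1 p (t + 1) x) 0 0 - (owalk θ0 θ1 p (t + 1) x) 1 1)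
      = ∑ x ∈ Finset.Icc (-((t : ℤ) + 1)) ((t : ℤ) + 1),
          ((fun y => c ^ 2 * f y + s ^ 2 * g y) (x + (-1))
            - (fun y => s ^ 2 * f y + c ^ 2 * g y) (x + 1)) :=
        Finset.sum_congr rfl (fun x _ => step x)
    _ = (∑ x ∈ Finset.Icc (-((t : ℤ) + 1)) ((t : ℤ) + 1),
          (fun y => c ^ 2 * f y + s ^ 2 * g y) (x + (-1)))
        - ∑ x ∈ Finset.Icc (-((t : ℤ) + 1)) ((t : ℤ) + 1),
          (fun y => s ^ 2 * f y + c ^ 2 * g y) (x + 1) := Finset.sum_sub_distrib _ _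
    _ = (∑ y ∈ Finset.Icc (-(t : ℤ)) t, (c ^ 2 * f y + s ^ 2 * g y))
        - ∑ y ∈ Finset.Icc (-(t : ℤ)) t, (s ^ 2 * f y + c ^ 2 * g y) := by
        rw [sum_shift_icc (fun y => c ^ 2 * f y + s ^ 2 * g y) t
            (fun y hy => by simp [hzf y hy, hzg y hy]) (-1) (by norm_num),
          sum_shift_icc (fun y => s ^ 2 * f y + c ^ 2 * g y) t
            (fun y hy => by simp [hzf y hy, hzg y hy]) 1 (by norm_num)]
    _ = (c ^ 2 - s ^ 2) * ∑ y ∈ Finset.Icc (-(t : ℤ)) t, (f y - g y) := by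
        rw [← Finset.sum_sub_distrib, Finset.mul_sum]
        exact Finset.sum_congr rfl (fun y _ => by ring)
    _ = (c ^ 2 - s ^ 2) * Sdq θ0 θ1 p t := rfl

lemma Emq_succ (θ0 θ1 p : ℝ) (hc0 : Real.cos θ0 = 0) (t : ℕ) :
    Emq θ0 θ1 p (t + 1) =
      Emq θ0 θ1 p t
        + ((Real.cos θ1 : ℂ) ^ 2 - (Real.sin θ1 : ℂ) ^ 2) * Sdq θ0 θ1 p t := by
  set c : ℂ := (Real.cos θ1 : ℂ) with hc
  set s : ℂ := (Real.sin θ1 : ℂ) with hs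
  have hone : c ^ 2 + s ^ 2 = 1 := by
    rw [hc, hs, ← Complex.ofReal_pow, ← Complex.ofReal_pow, ← Complex.ofReal_add,
      Real.cos_sq_add_sin_sq, Complex.ofReal_one]
  set f : ℤ → ℂ := fun y => (owalk θ0 θ1 p t y) 0 0 with hf
  set g : ℤ → ℂ := fun y => (owalk θ0 θ1 p t y) 1 1 with hg
  have hzf : ∀ y : ℤ, (t : ℤ) < |y| → f y = 0 := fun y hy => by
    simp [hf, owalk_supp θ0 θ1 p t y hy]
  have hzg : ∀ y : ℤ, (t : ℤ) < |y| → g y = 0 := fun y hy => by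
    simp [hg, owalk_supp θ0 θ1 p t y hy]
  have hcast : ((t + 1 : ℕ) : ℤ) = (t : ℤ) + 1 := by push_cast; ring
  have step : ∀ x : ℤ,
      (x : ℂ) * ((owalk θ0 θ1 p (t + 1) x) 0 0 + (owalk θ0 θ1 p (t + 1) x) 1 1) =
        (fun y : ℤ => ((y : ℂ) + 1) * (c ^ 2 * f y + s ^ 2 * g y)) (x + (-1))
          + (fun y : ℤ => ((y : ℂ) - 1) * (s ^ 2 * f y + c ^ 2 * g y)) (x + 1) := by
    intro x
    have h1 := owalk_step00 θ0 θ1 p hc0 t x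
    have h2 := owalk_step11 θ0 θ1 p hc0 t x
    have e1 : x + (-1) = x - 1 := by ring
    simp only [hf, hg, ← hc, ← hs, e1] at h1 h2 ⊢
    rw [h1, h2]
    push_cast
    ring
  unfold Emq
  rw [hcast]
  calc ∑ x ∈ Finset.Icc (-((t : ℤ) + 1)) ((t : ℤ) + 1),
        (x : ℂ) * ((owalk θ0 θ1 p (t + 1) x) 0 0 + (owalk θ0 θ1 p (t + 1) x) 1 1)
      = (∑ x ∈ Finset.Icc (-((t : ℤ) + 1)) ((t : ℤ) + 1),
          (fun y : ℤ => ((y : ℂ) + 1) * (c ^ 2 * f y + s ^ 2 * g y)) (x + (-1)))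
        + ∑ x ∈ Finset.Icc (-((t : ℤ) + 1)) ((t : ℤ) + 1),
          (fun y : ℤ => ((y : ℂ) - 1) * (s ^ 2 * f y + c ^ 2 * g y)) (x + 1) := by
        rw [← Finset.sum_add_distrib]
        exact Finset.sum_congr rfl (fun x _ => step x)
    _ = (∑ y ∈ Finset.Icc (-(t : ℤ)) t, ((y : ℂ) + 1) * (c ^ 2 * f y + s ^ 2 * g y))
        + ∑ y ∈ Finset.Icc (-(t : ℤ)) t, ((y : ℂ) - 1) * (s ^ 2 * f y + c ^ 2 * g y) := by
        rw [sum_shift_icc (fun y : ℤ => ((y : ℂ) + 1) * (c ^ 2 * f y + s ^ 2 * g y)) t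
            (fun y hy => by simp [hzf y hy, hzg y hy]) (-1) (by norm_num),
          sum_shift_icc (fun y : ℤ => ((y : ℂ) - 1) * (s ^ 2 * f y + c ^ 2 * g y)) t
            (fun y hy => by simp [hzf y hy, hzg y hy]) 1 (by norm_num)]
    _ = (∑ y ∈ Finset.Icc (-(t : ℤ)) t, (y : ℂ) * (f y + g y))
        + (c ^ 2 - s ^ 2) * ∑ y ∈ Finset.Icc (-(t : ℤ)) t, (f y - g y) := by
        rw [← Finset.sum_add_distrib, Finset.mul_sum, ← Finset.sum_add_distrib]
        refine Finset.sum_congr rfl (fun y _ => ?_)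
        linear_combination ((y : ℂ) * (f y + g y)) * hone
    _ = Emq θ0 θ1 p t + (c ^ 2 - s ^ 2) * Sdq θ0 θ1 p t := rfl

lemma Sdq_eq (θ0 θ1 p : ℝ) (hc0 : Real.cos θ0 = 0) (t : ℕ) :
    Sdq θ0 θ1 p t
      = ((Real.cos θ1 : ℂ) ^ 2 - (Real.sin θ1 : ℂ) ^ 2) ^ t * ((2 * p - 1 : ℝ) : ℂ) := by
  induction t with
  | zero =>
    simp only [Sdq, Nat.cast_zero, neg_zero, Finset.Icc_self, Finset.sum_singleton, pow_zero,
      one_mul]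
    simp only [owalk, if_pos rfl, if_true]
    have e0 : (Matrix.diagonal ![(p : ℂ), ((1 - p : ℝ) : ℂ)]) 0 0 = (p : ℂ) :=
      Matrix.diagonal_apply_eq _ 0
    have e1 : (Matrix.diagonal ![(p : ℂ), ((1 - p : ℝ) : ℂ)]) 1 1 = ((1 - p : ℝ) : ℂ) :=
      Matrix.diagonal_apply_eq _ 1
    rw [e0, e1]
    push_cast
    ring
  | succ t ih =>
    rw [Sdq_succ θ0 θ1 p hc0 t, ih, pow_succ]
    ring

lemma Emq_eq (θ0 θ1 p : ℝ) (hc0 : Real.cos θ0 = 0) (t : ℕ) :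
    Emq θ0 θ1 p t = ((2 * p - 1 : ℝ) : ℂ)
      * ∑ k ∈ Finset.range t, ((Real.cos θ1 : ℂ) ^ 2 - (Real.sin θ1 : ℂ) ^ 2) ^ (k + 1) := by
  induction t with
  | zero =>
    simp [Emq]
  | succ t ih =>
    rw [Emq_succ θ0 θ1 p hc0 t, ih, Sdq_eq θ0 θ1 p hc0 t, Finset.sum_range_succ]
    ring

lemma moment1_eq (θ0 θ1 p : ℝ) (hc0 : Real.cos θ0 = 0) (t : ℕ) :
    moment1 θ0 θ1 p t = (2 * p - 1)
      * ∑ k ∈ Finset.range t, (Real.cos θ1 ^ 2 - Real.sin θ1 ^ 2) ^ (k + 1) := by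
  have h1 : moment1 θ0 θ1 p t = (Emq θ0 θ1 p t).re := by
    unfold moment1 Emq findprob
    rw [Complex.re_sum]
    refine Finset.sum_congr rfl (fun x _ => ?_)
    rw [Matrix.trace_fin_two, Complex.mul_re]
    simp
  rw [h1, Emq_eq θ0 θ1 p hc0 t]
  have : ((2 * p - 1 : ℝ) : ℂ)
      * ∑ k ∈ Finset.range t, ((Real.cos θ1 : ℂ) ^ 2 - (Real.sin θ1 : ℂ) ^ 2) ^ (k + 1)
      = (((2 * p - 1)
        * ∑ k ∈ Finset.range t, (Real.cos θ1 ^ 2 - Real.sin θ1 ^ 2) ^ (k + 1) : ℝ) : ℂ) := by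
    push_cast
    ring
  rw [this, Complex.ofReal_re]

theorem owalk_moment1_limit_c0_zero (θ0 θ1 p : ℝ) (hp0 : 0 ≤ p) (hp1 : p ≤ 1)
    (hc0 : Real.cos θ0 = 0) (hs1 : Real.sin θ1 ≠ 0) (hc1 : Real.cos θ1 ≠ 0) :
    Filter.Tendsto (fun t : ℕ => moment1 θ0 θ1 p t) Filter.atTop
      (nhds ((2 * p - 1) * (1 - 2 * Real.sin θ1 ^ 2) / (2 * Real.sin θ1 ^ 2))) := by
  set r : ℝ := Real.cos θ1 ^ 2 - Real.sin θ1 ^ 2 with hr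
  have hpyth : Real.cos θ1 ^ 2 + Real.sin θ1 ^ 2 = 1 := Real.cos_sq_add_sin_sq θ1
  have hs1' : 0 < Real.sin θ1 ^ 2 := by positivity
  have hc1' : 0 < Real.cos θ1 ^ 2 := by positivity
  have hnorm : ‖r‖ < 1 := by
    rw [Real.norm_eq_abs, abs_lt]
    constructor <;> nlinarith
  have hgeom : Filter.Tendsto (fun n : ℕ => ∑ k ∈ Finset.range n, r ^ k) Filter.atTop
      (nhds (1 - r)⁻¹) := (hasSum_geometric_of_norm_lt_one hnorm).tendsto_sum_nat
  have hsum : ∀ t : ℕ, (2 * p - 1) * ∑ k ∈ Finset.range t, r ^ (k + 1)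
      = (2 * p - 1) * (r * ∑ k ∈ Finset.range t, r ^ k) := by
    intro t
    simp only [Finset.mul_sum]
    exact Finset.sum_congr rfl fun k _ => by rw [pow_succ]; ring
  have key : Filter.Tendsto (fun t : ℕ => (2 * p - 1) * ∑ k ∈ Finset.range t, r ^ (k + 1))
      Filter.atTop (nhds ((2 * p - 1) * (r * (1 - r)⁻¹))) := by
    have h2 := (hgeom.const_mul r).const_mul (2 * p - 1)
    exact h2.congr fun t => (hsum t).symm
  have heq : (2 * p - 1) * (r * (1 - r)⁻¹)
      = (2 * p - 1) * (1 - 2 * Real.sin θ1 ^ 2) / (2 * Real.sin θ1 ^ 2) := by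
    have h1 : 1 - r = 2 * Real.sin θ1 ^ 2 := by rw [hr]; nlinarith
    have h2 : r = 1 - 2 * Real.sin θ1 ^ 2 := by rw [hr]; nlinarith
    rw [h1, h2]
    field_simp
  rw [← heq]
  refine key.congr fun t => ?_
  rw [moment1_eq θ0 θ1 p hc0 t]
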